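/- Let k be a field, n a natural number, a : Fin n → ℤ weights with a i ≠ 0 for all i, and N ∈ ℤ with N > a i for every i. For a nonzero vector x : Fin n → k and w ∈ k, define the antidiagonal weight set Π_A(x,w) = {a i : x i ≠ 0} ∪ {a i − N : x i ≠ 0 and w ≠ 0}. Then Π_A(x,w) contains both a positive and a negative integer if and only if either (w = 0 and the set {a i : x i ≠ 0} contains both a positive and a negative integer) or (w ≠ 0 and the set {a i : x i ≠ 0} contains a positive integer). -/
import Mathlib


/-- Let `k` be a field, `a : Fin n → ℤ` weights with `a i ≠ 0` for all `i`,
and `N : ℤ` with `N > a i` for every `i`.  For a nonzero vector `x : Fin n → k` and `w ∈ k`,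
the antidiagonal weight set `Π_A(x,w) = {a i : x i ≠ 0} ∪ {a i - N : x i ≠ 0 ∧ w ≠ 0}`
contains both a positive and a negative integer if and only if either (`w = 0` and
`{a i : x i ≠ 0}` contains both a positive and a negative integer) or (`w ≠ 0` and
`{a i : x i ≠ 0}` contains a positive integer). -/
theorem antidiagonal_stability_affine (k : Type*) [Field k] (n : ℕ) (a : Fin n → ℤ)
    (ha : ∀ i, a i ≠ 0) (N : ℤ) (hN : ∀ i, a i < N)
    (x : Fin n → k) (hx : x ≠ 0) (w : k) :
    ((∃ m ∈ ({m : ℤ | ∃ i, x i ≠ 0 ∧ m = a i} ∪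
        {m : ℤ | ∃ i, x i ≠ 0 ∧ w ≠ 0 ∧ m = a i - N}), 0 < m) ∧
     (∃ m ∈ ({m : ℤ | ∃ i, x i ≠ 0 ∧ m = a i} ∪
        {m : ℤ | ∃ i, x i ≠ 0 ∧ w ≠ 0 ∧ m = a i - N}), m < 0)) ↔
    ((w = 0 ∧ (∃ i, x i ≠ 0 ∧ 0 < a i) ∧ ∃ j, x j ≠ 0 ∧ a j < 0) ∨
     (w ≠ 0 ∧ ∃ i, x i ≠ 0 ∧ 0 < a i)) := by
  constructor
  · rintro ⟨⟨m, hm, hmpos⟩, ⟨m', hm', hmneg⟩⟩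
    have hpos : ∃ i, x i ≠ 0 ∧ 0 < a i := by
      rcases hm with ⟨i, hi, rfl⟩ | ⟨i, hi, hw, rfl⟩
      · exact ⟨i, hi, hmpos⟩
      · exact absurd hmpos (by linarith [hN i])
    by_cases hw : w = 0
    · left
      refine ⟨hw, hpos, ?_⟩
      rcases hm' with ⟨j, hj, rfl⟩ | ⟨j, hj, hw', rfl⟩
      · exact ⟨j, hj, hmneg⟩
      · exact absurd hw hw'
    · exact Or.inr ⟨hw, hpos⟩
  · rintro (⟨hw, ⟨i, hi, hai⟩, ⟨j, hj, haj⟩⟩ | ⟨hw, ⟨i, hi, hai⟩⟩)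
    · exact ⟨⟨a i, Or.inl ⟨i, hi, rfl⟩, hai⟩, ⟨a j, Or.inl ⟨j, hj, rfl⟩, haj⟩⟩
    · exact ⟨⟨a i, Or.inl ⟨i, hi, rfl⟩, hai⟩,
        ⟨a i - N, Or.inr ⟨i, hi, hw, rfl⟩, by linarith [hN i]⟩⟩
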